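/- Let u ∈ H¹(ℝ), R > 0, and let g : ℝ → ℝ be bounded and Lipschitz with g = 0 on [−R, R]. Then ∫_ℝ g(x)⁴|u(x)|⁶ dx ≤ 8‖u‖⁴_{L²(|x|≥R)} ‖g²u'‖²_{L²(|x|≥R)} + 2‖u‖⁶_{L²(|x|≥R)} ‖(g²)'‖²_{L^∞(|x|≥R)}. -/

import Mathlib

open MeasureTheory Set

theorem stmt18 (u : ℝ → ℂ) (g : ℝ → ℝ) (R : ℝ) (hR : 0 < R)
    (hu : ContDiff ℝ 1 u) (hu2 : MemLp u 2 volume)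
    (hu'2 : MemLp (deriv u) 2 volume)
    (hgd : Differentiable ℝ g) (hgb : ∃ C, ∀ x, |g x| ≤ C)
    (L : NNReal) (hgl : LipschitzWith L g)
    (hg0 : ∀ x : ℝ, |x| ≤ R → g x = 0)
    (M : ℝ) (hM : ∀ x ∈ {x : ℝ | R ≤ |x|}, |deriv (fun y => (g y)^2) x| ≤ M) :
    ∫ x : ℝ, (g x)^4 * ‖u x‖^6 ≤
      8 * (∫ x in {x : ℝ | R ≤ |x|}, ‖u x‖^2)^2 *
        (∫ x in {x : ℝ | R ≤ |x|}, ((g x)^2 * ‖deriv u x‖)^2)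
      + 2 * (∫ x in {x : ℝ | R ≤ |x|}, ‖u x‖^2)^3 * M^2 := by
  obtain ⟨C, hC⟩ := hgb
  set S : Set ℝ := {x : ℝ | R ≤ |x|} with hS
  have hSm : MeasurableSet S := measurableSet_le measurable_const continuous_abs.measurable
  have hud : Differentiable ℝ u := hu.differentiable one_ne_zero
  have huc : Continuous u := hud.continuous
  have hu'c : Continuous (deriv u) := hu.continuous_deriv le_rfl
  have hgc : Continuous g := hgd.continuous
  have hnsq : ∀ z : ℂ, ‖z‖^2 = z.re^2 + z.im^2 := fun z => by
    rw [Complex.sq_norm, Complex.normSq_apply]; ring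
  set A : ℝ := ∫ x in S, ‖u x‖^2 with hA
  set B : ℝ := ∫ x in S, ((g x)^2 * ‖deriv u x‖)^2 with hB
  have hA0 : 0 ≤ A := setIntegral_nonneg hSm fun x _ => sq_nonneg _
  have hB0 : 0 ≤ B := setIntegral_nonneg hSm fun x _ => sq_nonneg _
  have hRS : R ∈ S := by simp [hS, abs_of_pos hR]
  have hM0 : 0 ≤ M := le_trans (abs_nonneg _) (hM R hRS)
  -- integrability facts
  have hu2S : Integrable (fun x => ‖u x‖^2) (volume.restrict S) :=
    ((memLp_two_iff_integrable_sq_norm hu2.1).mp hu2).restrict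
  have hGu' : MemLp (fun x => (g x)^2 * ‖deriv u x‖) 2 volume := by
    refine MemLp.of_le_mul (c := C^2) hu'2.norm
      (((hgc.pow 2).mul hu'c.norm).aestronglyMeasurable) ?_
    filter_upwards with x
    have h1 : (g x)^2 ≤ C^2 := by
      have := hC x
      nlinarith [abs_nonneg (g x), sq_abs (g x)]
    have h2 : (0:ℝ) ≤ ‖deriv u x‖ := norm_nonneg _
    rw [Real.norm_eq_abs, Real.norm_eq_abs, abs_of_nonneg (mul_nonneg (sq_nonneg _) h2),
      abs_of_nonneg h2]
    nlinarith [sq_nonneg (g x)]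
  have hGu'S : MemLp (fun x => (g x)^2 * ‖deriv u x‖) 2 (volume.restrict S) := hGu'.restrict S
  have hunS : MemLp (fun x => ‖u x‖) 2 (volume.restrict S) := (hu2.restrict S).norm
  set T : ℝ := ∫ x in S, ((g x)^2 * ‖deriv u x‖) * ‖u x‖ with hT
  have hT0 : 0 ≤ T := setIntegral_nonneg hSm fun x _ =>
    mul_nonneg (mul_nonneg (sq_nonneg _) (norm_nonneg _)) (norm_nonneg _)
  have hTI : Integrable (fun x => ((g x)^2 * ‖deriv u x‖) * ‖u x‖) (volume.restrict S) := by
    have h := memLp_one_iff_integrable.mp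
      (MemLp.smul (φ := fun x => (g x)^2 * ‖deriv u x‖) (f := fun x => ‖u x‖)
        hunS hGu'S (hpqr := ⟨by rw [ENNReal.inv_two_add_inv_two, inv_one]⟩))
    simpa [smul_eq_mul, Pi.mul_def] using h
  -- Cauchy-Schwarz: T^2 ≤ B * A
  have hconj : Real.HolderConjugate 2 2 := Real.HolderConjugate.two_two
  have hofR : ENNReal.ofReal (2:ℝ) = 2 := by
    rw [ENNReal.ofReal_ofNat]
  have hCS : T ≤ B ^ ((1:ℝ)/2) * A ^ ((1:ℝ)/2) := by
    have h := integral_mul_le_Lp_mul_Lq_of_nonneg (μ := volume.restrict S) hconj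
      (f := fun x => (g x)^2 * ‖deriv u x‖) (g := fun x => ‖u x‖)
      (ae_of_all _ fun x => mul_nonneg (sq_nonneg _) (norm_nonneg _))
      (ae_of_all _ fun x => norm_nonneg _) (by rwa [hofR]) (by rwa [hofR])
    simpa [Real.rpow_two] using h
  have hT2 : T^2 ≤ A * B := by
    have h1 : T^2 ≤ (B ^ ((1:ℝ)/2) * A ^ ((1:ℝ)/2))^2 := pow_le_pow_left₀ hT0 hCS 2
    have h2 : (B ^ ((1:ℝ)/2) * A ^ ((1:ℝ)/2))^2 = B * A := by
      rw [mul_pow, ← Real.rpow_natCast (B ^ ((1:ℝ)/2)) 2, ← Real.rpow_natCast (A ^ ((1:ℝ)/2)) 2,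
        ← Real.rpow_mul hB0, ← Real.rpow_mul hA0]
      norm_num
    rw [h2] at h1; linarith
  -- the function F and its derivative
  set F : ℝ → ℝ := fun y => (g y)^2 * ((u y).re^2 + (u y).im^2) with hF
  have hFeq : ∀ y, F y = (g y)^2 * ‖u y‖^2 := fun y => by rw [hF]; rw [hnsq]
  have hFx : ∀ x : ℝ, HasDerivAt F
      (deriv (fun y => (g y)^2) x * ((u x).re^2 + (u x).im^2)
        + (g x)^2 * ((2:ℕ) * (u x).re^(2-1) * (deriv u x).re
          + (2:ℕ) * (u x).im^(2-1) * (deriv u x).im)) x := by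
    intro x
    have hux : HasDerivAt u (deriv u x) x := (hud x).hasDerivAt
    have hre : HasDerivAt (fun y => (u y).re) ((deriv u x).re) x :=
      Complex.reCLM.hasFDerivAt.comp_hasDerivAt x hux
    have him : HasDerivAt (fun y => (u y).im) ((deriv u x).im) x :=
      Complex.imCLM.hasFDerivAt.comp_hasDerivAt x hux
    have hN : HasDerivAt (fun y => (u y).re^2 + (u y).im^2)
        ((2:ℕ) * (u x).re^(2-1) * (deriv u x).re
          + (2:ℕ) * (u x).im^(2-1) * (deriv u x).im) x := (hre.pow 2).add (him.pow 2)
    have hg2 : HasDerivAt (fun y => (g y)^2) ((2:ℕ) * g x ^(2-1) * deriv g x) x :=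
      (hgd x).hasDerivAt.pow 2
    have hg2' : HasDerivAt (fun y => (g y)^2) (deriv (fun y => (g y)^2) x) x := by
      rw [hg2.deriv]; exact hg2
    exact hg2'.mul hN
  have hFd : Differentiable ℝ F := fun x => (hFx x).differentiableAt
  have hF0 : ∀ x, 0 ≤ F x := fun x => by
    rw [hFeq]; positivity
  set φ : ℝ → ℝ := fun x => M * ‖u x‖^2 + 2 * (((g x)^2 * ‖deriv u x‖) * ‖u x‖) with hφ
  have hDbound : ∀ x ∈ S, |deriv F x| ≤ φ x := by
    intro x hx
    rw [(hFx x).deriv]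
    have hX : ((2:ℕ) * (u x).re^(2-1) * (deriv u x).re
        + (2:ℕ) * (u x).im^(2-1) * (deriv u x).im)
        = 2 * ((starRingEnd ℂ) (deriv u x) * u x).re := by
      simp [Complex.mul_re]; ring
    have hXb : |((2:ℕ) * (u x).re^(2-1) * (deriv u x).re
        + (2:ℕ) * (u x).im^(2-1) * (deriv u x).im)| ≤ 2 * (‖deriv u x‖ * ‖u x‖) := by
      rw [hX, abs_mul, abs_two]
      have h1 : |((starRingEnd ℂ) (deriv u x) * u x).re| ≤
          ‖(starRingEnd ℂ) (deriv u x) * u x‖ := Complex.abs_re_le_norm _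
      rw [norm_mul, Complex.norm_conj] at h1
      linarith
    have hg2b : |deriv (fun y => (g y)^2) x| ≤ M := hM x hx
    have hN' : ((u x).re^2 + (u x).im^2) = ‖u x‖^2 := (hnsq (u x)).symm
    calc |deriv (fun y => (g y)^2) x * ((u x).re^2 + (u x).im^2)
          + (g x)^2 * ((2:ℕ) * (u x).re^(2-1) * (deriv u x).re
            + (2:ℕ) * (u x).im^(2-1) * (deriv u x).im)|
        ≤ |deriv (fun y => (g y)^2) x| * |((u x).re^2 + (u x).im^2)|
          + (g x)^2 * |((2:ℕ) * (u x).re^(2-1) * (deriv u x).re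
            + (2:ℕ) * (u x).im^(2-1) * (deriv u x).im)| := by
          rw [← abs_mul]
          have := abs_mul ((g x)^2) (((2:ℕ) * (u x).re^(2-1) * (deriv u x).re
            + (2:ℕ) * (u x).im^(2-1) * (deriv u x).im))
          rw [abs_of_nonneg (sq_nonneg (g x))] at this
          rw [← this]
          exact abs_add_le _ _
      _ ≤ M * ‖u x‖^2 + (g x)^2 * (2 * (‖deriv u x‖ * ‖u x‖)) := by
          have h2 : |((u x).re^2 + (u x).im^2)| = ‖u x‖^2 := by
            rw [abs_of_nonneg (by positivity), hN']
          rw [h2]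
          have := mul_le_mul_of_nonneg_left hXb (sq_nonneg (g x))
          have h3 := mul_le_mul_of_nonneg_right hg2b (sq_nonneg ‖u x‖)
          nlinarith [sq_nonneg ‖u x‖]
      _ = φ x := by rw [hφ]; ring
  have hφI : Integrable φ (volume.restrict S) := (hu2S.const_mul M).add (hTI.const_mul 2)
  have hφnn : ∀ x, 0 ≤ φ x := fun x => by
    rw [hφ]; positivity
  have hDI : IntegrableOn (deriv F) S volume := by
    refine Integrable.mono' hφI (measurable_deriv F).aestronglyMeasurable ?_
    rw [ae_restrict_iff' hSm]
    exact ae_of_all _ fun x hx => by rw [Real.norm_eq_abs]; exact hDbound x hx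
  have hAbsI : IntegrableOn (fun x => |deriv F x|) S volume := hDI.abs
  set K : ℝ := ∫ x in S, |deriv F x| with hK
  have hK0 : 0 ≤ K := setIntegral_nonneg hSm fun x _ => abs_nonneg _
  have hKle : K ≤ M * A + 2 * T := by
    have h1 : K ≤ ∫ x in S, φ x := setIntegral_mono_on hAbsI hφI hSm hDbound
    have h2 : ∫ x in S, φ x = M * A + 2 * T := by
      rw [hφ, integral_add (hu2S.const_mul M) (hTI.const_mul 2),
        integral_const_mul, integral_const_mul]
    linarith
  -- pointwise bound F x ≤ K on S
  have hFle : ∀ x ∈ S, F x ≤ K := by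
    intro x hx
    have hx' : R ≤ x ∨ R ≤ -x := le_abs.mp hx
    rcases hx' with hx1 | hx1
    · -- x ≥ R
      have hFR : F R = 0 := by
        rw [hFeq, hg0 R (by rw [abs_of_pos hR])]; ring
      have hsub : Set.uIcc R x ⊆ S := by
        rw [Set.uIcc_of_le hx1]
        intro y hy
        exact le_trans hy.1 (le_abs_self y)
      have hii : IntervalIntegrable (deriv F) volume R x :=
        (hDI.mono_set hsub).intervalIntegrable
      have hftc : ∫ y in R..x, deriv F y = F x - F R :=
        intervalIntegral.integral_eq_sub_of_hasDerivAt
          (fun y _ => (hFd y).hasDerivAt) hii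
      have h1 : F x = ∫ y in R..x, deriv F y := by rw [hftc, hFR]; ring
      have h2 : |∫ y in R..x, deriv F y| ≤ ∫ y in R..x, |deriv F y| :=
        intervalIntegral.abs_integral_le_integral_abs hx1
      have h3 : ∫ y in R..x, |deriv F y| = ∫ y in Set.Ioc R x, |deriv F y| :=
        intervalIntegral.integral_of_le hx1
      have h4 : ∫ y in Set.Ioc R x, |deriv F y| ≤ K := by
        refine setIntegral_mono_set hAbsI (ae_of_all _ fun y => abs_nonneg _) ?_
        refine HasSubset.Subset.eventuallyLE ?_
        intro y hy
        exact le_trans (le_of_lt hy.1) (le_abs_self y)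
      calc F x ≤ |∫ y in R..x, deriv F y| := h1 ▸ le_abs_self _
        _ ≤ ∫ y in R..x, |deriv F y| := h2
        _ = ∫ y in Set.Ioc R x, |deriv F y| := h3
        _ ≤ K := h4
    · -- x ≤ -R
      have hx2 : x ≤ -R := by linarith
      have hFR : F (-R) = 0 := by
        rw [hFeq, hg0 (-R) (by rw [abs_neg, abs_of_pos hR])]; ring
      have hsub : Set.uIcc x (-R) ⊆ S := by
        rw [Set.uIcc_of_le hx2]
        intro y hy
        have : R ≤ -y := by linarith [hy.2]
        exact le_trans this (neg_le_abs y)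
      have hii : IntervalIntegrable (deriv F) volume x (-R) :=
        (hDI.mono_set hsub).intervalIntegrable
      have hftc : ∫ y in x..(-R), deriv F y = F (-R) - F x :=
        intervalIntegral.integral_eq_sub_of_hasDerivAt
          (fun y _ => (hFd y).hasDerivAt) hii
      have h1 : F x = -(∫ y in x..(-R), deriv F y) := by rw [hftc, hFR]; ring
      have h2 : |∫ y in x..(-R), deriv F y| ≤ ∫ y in x..(-R), |deriv F y| :=
        intervalIntegral.abs_integral_le_integral_abs hx2
      have h3 : ∫ y in x..(-R), |deriv F y| = ∫ y in Set.Ioc x (-R), |deriv F y| :=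
        intervalIntegral.integral_of_le hx2
      have h4 : ∫ y in Set.Ioc x (-R), |deriv F y| ≤ K := by
        refine setIntegral_mono_set hAbsI (ae_of_all _ fun y => abs_nonneg _) ?_
        refine HasSubset.Subset.eventuallyLE ?_
        intro y hy
        have : R ≤ -y := by linarith [hy.2]
        exact le_trans this (neg_le_abs y)
      calc F x = -(∫ y in x..(-R), deriv F y) := h1
        _ ≤ |∫ y in x..(-R), deriv F y| := neg_le_abs _
        _ ≤ ∫ y in x..(-R), |deriv F y| := h2
        _ = ∫ y in Set.Ioc x (-R), |deriv F y| := h3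
        _ ≤ K := h4
  -- rewrite the main integral over S
  have hrepr : ∀ x, (g x)^4 * ‖u x‖^6 = (F x)^2 * ‖u x‖^2 := by
    intro x
    rw [hFeq]
    ring
  have hvanish : ∀ x ∉ S, (g x)^4 * ‖u x‖^6 = 0 := by
    intro x hx
    have : |x| ≤ R := le_of_not_ge hx
    rw [hg0 x this]
    ring
  have h1 : ∫ x : ℝ, (g x)^4 * ‖u x‖^6 = ∫ x in S, (g x)^4 * ‖u x‖^6 :=
    (setIntegral_eq_integral_of_forall_compl_eq_zero hvanish).symm
  have hbigI : IntegrableOn (fun x => (g x)^4 * ‖u x‖^6) S volume := by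
    refine Integrable.mono' (hu2S.const_mul (K^2))
      (((hgc.pow 4).mul ((huc.norm).pow 6)).aestronglyMeasurable) ?_
    rw [ae_restrict_iff' hSm]
    refine ae_of_all _ fun x hx => ?_
    rw [Real.norm_eq_abs, abs_of_nonneg (by positivity), hrepr]
    have hunn : (0:ℝ) ≤ ‖u x‖^2 := sq_nonneg _
    have := pow_le_pow_left₀ (hF0 x) (hFle x hx) 2
    nlinarith
  have h2 : ∫ x in S, (g x)^4 * ‖u x‖^6 ≤ ∫ x in S, K^2 * ‖u x‖^2 := by
    refine setIntegral_mono_on hbigI (hu2S.const_mul _) hSm fun x hx => ?_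
    rw [hrepr]
    have := pow_le_pow_left₀ (hF0 x) (hFle x hx) 2
    nlinarith [sq_nonneg ‖u x‖]
  have h3 : ∫ x in S, K^2 * ‖u x‖^2 = K^2 * A := integral_const_mul _ _
  clear_value A B T K F
  -- final algebra
  have hK2 : K^2 ≤ (M * A + 2 * T)^2 := pow_le_pow_left₀ hK0 hKle 2
  have hmain : K^2 * A ≤ 8 * A^2 * B + 2 * A^3 * M^2 := by
    have hstep : K^2 * A ≤ (M * A + 2 * T)^2 * A :=
      mul_le_mul_of_nonneg_right hK2 hA0
    nlinarith [hT2, hA0, hB0, hM0, hT0, mul_nonneg hA0 (sq_nonneg (M * A - 2 * T)),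
      mul_le_mul_of_nonneg_left hT2 (mul_nonneg (by norm_num : (0:ℝ) ≤ 4) hA0)]
  rw [h1]
  calc ∫ x in S, (g x)^4 * ‖u x‖^6 ≤ K^2 * A := by rw [← h3]; exact h2
    _ ≤ 8 * A^2 * B + 2 * A^3 * M^2 := hmain
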